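/- arXiv:1810.05073 — 2 statements merged into one kernel-verified Lean document; each statement's English description precedes it below -/
import Mathlib

section
/- Let U ⊆ ℝ⁴ be open and let u : U → ℝ be three times continuously differentiable. Then at every point of U one has the pointwise divergence identity σ₂(A_u) = −(1/2)·∑_{i=1}^{4} ∂ᵢ( ∑_{j=1}^{4} (−Δu·δᵢⱼ + ∂ᵢ∂ⱼu − ∂ᵢu·∂ⱼu)·∂ⱼu ), i.e. σ₂(A_u) equals −1/2 times the divergence of the vector field V with components Vᵢ = ∑_j (−Δu·δᵢⱼ + ∂ᵢ∂ⱼu − ∂ᵢu·∂ⱼu)·∂ⱼu. -/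
open MeasureTheory Filter Topology Asymptotics Finset
open scoped ENNReal NNReal

noncomputable section

/-- Identify `ℝ⁴` with `EuclideanSpace ℝ (Fin 4)`. -/
abbrev E4 : Type := EuclideanSpace ℝ (Fin 4)

/-- Partial derivative `∂ᵢ f` in the `i`-th coordinate direction. -/
def pd (i : Fin 4) (f : E4 → ℝ) (x : E4) : ℝ :=
  fderiv ℝ f x (EuclideanSpace.single i 1)

/-- `σ₁(M) = tr M`. -/
def sigma1 {n : ℕ} (M : Matrix (Fin n) (Fin n) ℝ) : ℝ := M.trace

/-- `σ₂(M) = ((tr M)² − tr (M²))/2`. -/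
def sigma2 {n : ℕ} (M : Matrix (Fin n) (Fin n) ℝ) : ℝ :=
  (M.trace ^ 2 - (M * M).trace) / 2

/-- The conformal Schouten matrix of `u`:
`(A_u)_{ij} = −∂ᵢ∂ⱼu + ∂ᵢu ∂ⱼu − (1/2)|∇u|² δᵢⱼ`. -/
def schouten (u : E4 → ℝ) (x : E4) : Matrix (Fin 4) (Fin 4) ℝ :=
  Matrix.of fun i j =>
    -(pd i (pd j u) x) + pd i u x * pd j u x
      - (1 / 2) * (∑ k, pd k u x ^ 2) * (if i = j then 1 else 0)

/-- The Euclidean Laplacian `Δu = ∑ᵢ ∂ᵢ∂ᵢu`. -/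
def lap (u : E4 → ℝ) (x : E4) : ℝ := ∑ i, pd i (pd i u) x

lemma contDiffAt_pd {m : WithTop ℕ∞} {f : E4 → ℝ} {x : E4} (j : Fin 4)
    (hf : ContDiffAt ℝ (m + 1) f x) : ContDiffAt ℝ m (pd j f) x := by
  have h1 : ContDiffAt ℝ m (fderiv ℝ f) x := hf.fderiv_right le_rfl
  have h2 := (ContinuousLinearMap.apply ℝ ℝ (EuclideanSpace.single j (1:ℝ))).contDiff (n := m)
  exact (h2.contDiffAt).comp x h1

lemma pd_pd_eq {f : E4 → ℝ} {x : E4} (hf : ContDiffAt ℝ 2 f x) (i j : Fin 4) :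
    pd i (pd j f) x = fderiv ℝ (fderiv ℝ f) x (EuclideanSpace.single i 1)
      (EuclideanSpace.single j 1) := by
  have h1 : DifferentiableAt ℝ (fderiv ℝ f) x :=
    (hf.fderiv_right (m := 1) le_rfl).differentiableAt (by norm_num)
  have : pd j f = fun y => (fderiv ℝ f y) (EuclideanSpace.single j (1:ℝ)) := rfl
  rw [pd, this, fderiv_clm_apply h1 (differentiableAt_const _)]
  simp

lemma pd_symm {f : E4 → ℝ} {x : E4} (hf : ContDiffAt ℝ 2 f x) (i j : Fin 4) :
    pd i (pd j f) x = pd j (pd i f) x := by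
  rw [pd_pd_eq hf i j, pd_pd_eq hf j i]
  exact hf.isSymmSndFDerivAt (by norm_num) _ _

lemma pd_congr {f g : E4 → ℝ} {x : E4} (h : f =ᶠ[𝓝 x] g) (i : Fin 4) :
    pd i f x = pd i g x := by rw [pd, pd, h.fderiv_eq]

lemma pd_sum {ι : Type*} (s : Finset ι) {f : ι → E4 → ℝ} {x : E4}
    (hf : ∀ j ∈ s, DifferentiableAt ℝ (f j) x) (i : Fin 4) :
    pd i (fun y => ∑ j ∈ s, f j y) x = ∑ j ∈ s, pd i (f j) x := by
  rw [pd, fderiv_fun_sum hf]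
  simp [pd]

lemma pd_mul {f g : E4 → ℝ} {x : E4} (hf : DifferentiableAt ℝ f x)
    (hg : DifferentiableAt ℝ g x) (i : Fin 4) :
    pd i (fun y => f y * g y) x = pd i f x * g x + f x * pd i g x := by
  rw [pd, fderiv_fun_mul hf hg]
  simp [pd]; ring

lemma pd_sub {f g : E4 → ℝ} {x : E4} (hf : DifferentiableAt ℝ f x)
    (hg : DifferentiableAt ℝ g x) (i : Fin 4) :
    pd i (fun y => f y - g y) x = pd i f x - pd i g x := by
  rw [pd, fderiv_fun_sub hf hg]; simp [pd]

lemma pd_add {f g : E4 → ℝ} {x : E4} (hf : DifferentiableAt ℝ f x)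
    (hg : DifferentiableAt ℝ g x) (i : Fin 4) :
    pd i (fun y => f y + g y) x = pd i f x + pd i g x := by
  rw [pd, fderiv_fun_add hf hg]; simp [pd]

lemma pd_neg {f : E4 → ℝ} {x : E4} (i : Fin 4) :
    pd i (fun y => -(f y)) x = -(pd i f x) := by
  rw [pd, fderiv_fun_neg]; simp [pd]

lemma pd_mul_const {f : E4 → ℝ} {x : E4} (hf : DifferentiableAt ℝ f x) (c : ℝ) (i : Fin 4) :
    pd i (fun y => f y * c) x = pd i f x * c := by
  rw [pd, fderiv_mul_const hf]; simp [pd, mul_comm]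

set_option maxHeartbeats 2000000 in
lemma key_algebra (d1 : Fin 4 → ℝ) (d2 : Fin 4 → Fin 4 → ℝ) (d3 : Fin 4 → Fin 4 → Fin 4 → ℝ)
    (h2 : ∀ i j, d2 i j = d2 j i) (h3 : ∀ i j, d3 i i j = d3 j i i) :
    ((∑ i, (-(d2 i i) + d1 i * d1 i - (1/2) * (∑ k, d1 k ^ 2) * (if i = i then (1:ℝ) else 0)))^2
      - ∑ i, ∑ j, (-(d2 i j) + d1 i * d1 j - (1/2)*(∑ k, d1 k ^2)*(if i = j then (1:ℝ) else 0)) *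
                  (-(d2 j i) + d1 j * d1 i - (1/2)*(∑ k, d1 k ^2)*(if j = i then (1:ℝ) else 0))) / 2
    = -(1/2) * ∑ i, ∑ j,
        ((-(∑ k, d3 i k k) * (if i = j then (1:ℝ) else 0) + d3 i i j
            - (d2 i i * d1 j + d1 i * d2 i j)) * d1 j
        + (-(∑ k, d2 k k) * (if i = j then (1:ℝ) else 0) + d2 i j - d1 i * d1 j) * d2 i j) := by
  simp only [Fin.sum_univ_four, Fin.isValue, Fin.reduceEq, reduceIte, mul_one, mul_zero,
    one_ne_zero]
  rw [h2 1 0, h2 2 0, h2 2 1, h2 3 0, h2 3 1, h2 3 2,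
    h3 0 1, h3 0 2, h3 0 3, h3 1 0, h3 1 2, h3 1 3,
    h3 2 0, h3 2 1, h3 2 3, h3 3 0, h3 3 1, h3 3 2]
  ring

/-- the pointwise divergence identity
`σ₂(A_u) = −(1/2) ∑ᵢ ∂ᵢ( ∑ⱼ (−Δu δᵢⱼ + ∂ᵢ∂ⱼu − ∂ᵢu ∂ⱼu) ∂ⱼu )`
for a `C³` function `u` on an open set `U ⊆ ℝ⁴`. -/
theorem sigma2_divergence_identity (U : Set E4) (hU : IsOpen U) (u : E4 → ℝ)
    (hu : ContDiffOn ℝ 3 u U) (x : E4) (hx : x ∈ U) :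
    sigma2 (schouten u x) =
      -(1 / 2) * ∑ i, pd i (fun y => ∑ j,
        (-(lap u y) * (if i = j then (1 : ℝ) else 0) + pd i (pd j u) y
          - pd i u y * pd j u y) * pd j u y) x := by
  have hx3 : ContDiffAt ℝ 3 u x := hu.contDiffAt (hU.mem_nhds hx)
  have c1 : ∀ a : Fin 4, ContDiffAt ℝ 2 (pd a u) x := fun a =>
    contDiffAt_pd a (hx3.of_le (by norm_num))
  have c2 : ∀ a b : Fin 4, ContDiffAt ℝ 1 (pd a (pd b u)) x := fun a b =>
    contDiffAt_pd a ((c1 b).of_le (by norm_num))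
  have d1f : ∀ a : Fin 4, DifferentiableAt ℝ (pd a u) x := fun a =>
    (c1 a).differentiableAt (by norm_num)
  have d2f : ∀ a b : Fin 4, DifferentiableAt ℝ (pd a (pd b u)) x := fun a b =>
    (c2 a b).differentiableAt (by norm_num)
  have hlapeq : lap u = fun y => ∑ k, pd k (pd k u) y := rfl
  have dlap : DifferentiableAt ℝ (lap u) x := by
    rw [hlapeq]; exact DifferentiableAt.fun_sum fun k _ => d2f k k
  -- symmetry facts
  have h2s : ∀ a b : Fin 4, pd a (pd b u) x = pd b (pd a u) x := fun a b =>
    pd_symm (hx3.of_le (by norm_num)) a b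
  have hev : ∀ a b : Fin 4, (pd a (pd b u)) =ᶠ[𝓝 x] (pd b (pd a u)) := by
    intro a b
    filter_upwards [hU.mem_nhds hx] with y hy
    exact pd_symm ((hu.contDiffAt (hU.mem_nhds hy)).of_le (by norm_num)) a b
  have h3s : ∀ i j : Fin 4,
      pd i (pd i (pd j u)) x = pd j (pd i (pd i u)) x := by
    intro i j
    calc pd i (pd i (pd j u)) x = pd i (pd j (pd i u)) x := pd_congr (hev i j) i
      _ = pd j (pd i (pd i u)) x := pd_symm ((c1 i)) i j
  -- compute the divergence term
  have hpd : ∀ i : Fin 4,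
      pd i (fun y => ∑ j, (-(lap u y) * (if i = j then (1:ℝ) else 0) + pd i (pd j u) y
          - pd i u y * pd j u y) * pd j u y) x
      = ∑ j, ((-(∑ k, pd i (pd k (pd k u)) x) * (if i = j then (1:ℝ) else 0)
            + pd i (pd i (pd j u)) x
            - (pd i (pd i u) x * pd j u x + pd i u x * pd i (pd j u) x)) * pd j u x
          + (-(lap u x) * (if i = j then (1:ℝ) else 0) + pd i (pd j u) x
            - pd i u x * pd j u x) * pd i (pd j u) x) := by
    intro i
    have dA : ∀ j : Fin 4, DifferentiableAt ℝ
        (fun y => -(lap u y) * (if i = j then (1:ℝ) else 0) + pd i (pd j u) y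
          - pd i u y * pd j u y) x := fun j =>
      ((dlap.neg.mul_const _).add (d2f i j)).sub ((d1f i).mul (d1f j))
    rw [pd_sum _ (fun j _ => (dA j).fun_mul (d1f j)) i]
    refine Finset.sum_congr rfl fun j _ => ?_
    rw [pd_mul (dA j) (d1f j) i,
      pd_sub ((dlap.fun_neg.mul_const _).fun_add (d2f i j)) ((d1f i).fun_mul (d1f j)) i,
      pd_add (dlap.fun_neg.mul_const _) (d2f i j) i,
      pd_mul_const dlap.fun_neg _ i, pd_neg i,
      pd_mul (d1f i) (d1f j) i]
    have : pd i (lap u) x = ∑ k, pd i (pd k (pd k u)) x := by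
      rw [hlapeq, pd_sum _ (fun k _ => d2f k k) i]
    rw [this]
  rw [Finset.sum_congr rfl (fun i _ => hpd i)]
  have := key_algebra (fun a => pd a u x) (fun a b => pd a (pd b u) x)
    (fun a b c => pd a (pd b (pd c u)) x) h2s h3s
  simp only [sigma2, schouten, Matrix.trace, Matrix.diag_apply, Matrix.mul_apply,
    Matrix.of_apply]
  exact this
end
end

section
/- Let U ⊆ ℝ⁴ be open and u : U → ℝ be twice continuously differentiable, and suppose σ₂(A_u(x)) ≠ 0 for every x ∈ U. Let S = {x ∈ U : ∇u(x) = 0}. Then the 3-dimensional Hausdorff measure of S is zero and the 4-dimensional Hausdorff measure of S is zero. -/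
open MeasureTheory Filter Topology Asymptotics Finset
open scoped ENNReal NNReal

noncomputable section

lemma exists_minor (H : Fin 4 → Fin 4 → ℝ)
    (hσ : (∑ i, H i i) ^ 2 - (∑ i, ∑ j, H i j * H j i) ≠ 0) :
    ∃ i j, H i i * H j j - H i j * H j i ≠ 0 := by
  by_contra hc
  push_neg at hc
  apply hσ
  have h1 : (∑ i, H i i) ^ 2 = ∑ i, ∑ j, H i i * H j j := by
    rw [sq, Finset.sum_mul_sum]
  rw [h1, ← Finset.sum_sub_distrib]
  refine Finset.sum_eq_zero fun i _ => ?_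
  rw [← Finset.sum_sub_distrib]
  exact Finset.sum_eq_zero fun j _ => hc i j

lemma local_dimH (U : Set E4) (hU : IsOpen U) (u : E4 → ℝ)
    (x₀ : E4) (hx₀U : x₀ ∈ U)
    (hpd : ∀ k : Fin 4, ContDiffOn ℝ 1 (pd k u) U)
    (i j : Fin 4)
    (hij : pd i (pd i u) x₀ * pd j (pd j u) x₀ - pd i (pd j u) x₀ * pd j (pd i u) x₀ ≠ 0) :
    ∃ W ∈ 𝓝 x₀, dimH ({x : E4 | x ∈ U ∧ ∀ i, pd i u x = 0} ∩ W) ≤ 2 := by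
  set H : Fin 4 → Fin 4 → ℝ := fun a b => pd a (pd b u) x₀ with hH
  set Di : E4 →L[ℝ] ℝ := fderiv ℝ (pd i u) x₀ with hDi
  set Dj : E4 →L[ℝ] ℝ := fderiv ℝ (pd j u) x₀ with hDj
  have hDik : ∀ k, Di (EuclideanSpace.single k 1) = H k i := fun k => rfl
  have hDjk : ∀ k, Dj (EuclideanSpace.single k 1) = H k j := fun k => rfl
  set L : E4 →L[ℝ] ℝ × ℝ := Di.prod Dj with hL
  set Δ : ℝ := H i i * H j j - H i j * H j i with hΔ
  have hΔ0 : Δ ≠ 0 := hij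
  have hLsurj : Function.Surjective L := by
    rintro ⟨p, q⟩
    refine ⟨((p * H j j - q * H j i) / Δ) • EuclideanSpace.single i 1
      + ((q * H i i - p * H i j) / Δ) • EuclideanSpace.single j 1, ?_⟩
    have : L (((p * H j j - q * H j i) / Δ) • EuclideanSpace.single i 1
        + ((q * H i i - p * H i j) / Δ) • EuclideanSpace.single j 1)
        = (((p * H j j - q * H j i) / Δ) * H i i + ((q * H i i - p * H i j) / Δ) * H j i,
           ((p * H j j - q * H j i) / Δ) * H i j + ((q * H i i - p * H i j) / Δ) * H j j) := by
      simp [hL, ContinuousLinearMap.prod_apply, hDik, hDjk, map_add, _root_.map_smul, smul_eq_mul]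
    rw [this]
    ext
    · show _ = p
      field_simp
      ring
    · show _ = q
      field_simp
      ring
  -- kernel
  set K : Submodule ℝ E4 := LinearMap.ker (L : E4 →ₗ[ℝ] ℝ × ℝ) with hK
  have hfinK : Module.finrank ℝ K = 2 := by
    have h1 := LinearMap.finrank_range_add_finrank_ker (L : E4 →ₗ[ℝ] ℝ × ℝ)
    have h2 : LinearMap.range (L : E4 →ₗ[ℝ] ℝ × ℝ) = ⊤ :=
      LinearMap.range_eq_top.mpr hLsurj
    have h5 : LinearMap.ker (L : E4 →ₗ[ℝ] ℝ × ℝ) = K := rfl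
    rw [h2, finrank_top, h5] at h1
    have h3 : Module.finrank ℝ (ℝ × ℝ) = 2 := by simp
    have h4 : Module.finrank ℝ E4 = 4 := by simp [finrank_euclideanSpace]
    rw [h3, h4] at h1
    omega
  set π : E4 →L[ℝ] K := K.orthogonalProjectionOnto with hπ
  set T : E4 →L[ℝ] (ℝ × ℝ) × K := L.prod π with hT
  have hTker : ∀ v : E4, T v = 0 → v = 0 := by
    intro v hv
    have h1 : L v = 0 := congrArg Prod.fst hv
    have h2 : π v = 0 := congrArg Prod.snd hv
    have hvK : v ∈ K := h1
    have h3 : K.orthogonalProjectionOnto v = (⟨v, hvK⟩ : K) :=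
      Submodule.orthogonalProjectionOnto_mem_subspace_eq_self (⟨v, hvK⟩ : K)
    rw [hπ] at h2
    rw [h2] at h3
    simpa using congrArg Subtype.val h3.symm
  have hTinj : Function.Injective T := by
    intro a b hab
    have h1 : T (a - b) = 0 := by rw [map_sub, hab, sub_self]
    exact sub_eq_zero.mp (hTker _ h1)
  have hTsurj : Function.Surjective T := by
    have heq : Module.finrank ℝ E4 = Module.finrank ℝ ((ℝ × ℝ) × K) := by
      simp [finrank_euclideanSpace, hfinK]
    exact (LinearMap.injective_iff_surjective_of_finrank_eq_finrank heq).mp hTinj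
  set eL : E4 ≃ₗ[ℝ] (ℝ × ℝ) × K :=
    LinearEquiv.ofBijective (T : E4 →ₗ[ℝ] (ℝ × ℝ) × K) ⟨hTinj, hTsurj⟩ with heL
  set e : E4 ≃L[ℝ] (ℝ × ℝ) × K := eL.toContinuousLinearEquiv with he
  have hcoe : (e : E4 →L[ℝ] (ℝ × ℝ) × K) = T := by
    ext v <;> rfl
  set Φ : E4 → (ℝ × ℝ) × K := fun x => ((pd i u x, pd j u x), π x) with hΦdef
  have hci : ContDiffAt ℝ 1 (pd i u) x₀ := (hpd i).contDiffAt (hU.mem_nhds hx₀U)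
  have hcj : ContDiffAt ℝ 1 (pd j u) x₀ := (hpd j).contDiffAt (hU.mem_nhds hx₀U)
  have hsf : HasStrictFDerivAt (fun x => ((pd i u x, pd j u x) : ℝ × ℝ)) L x₀ :=
    HasStrictFDerivAt.prodMk (hci.hasStrictFDerivAt one_ne_zero) (hcj.hasStrictFDerivAt one_ne_zero)
  have hΦT : HasStrictFDerivAt Φ T x₀ := hsf.prodMk π.hasStrictFDerivAt
  have hΦ : HasStrictFDerivAt Φ (e : E4 →L[ℝ] (ℝ × ℝ) × K) x₀ := by
    rw [hcoe]; exact hΦT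
  set ψ : (ℝ × ℝ) × K → E4 := hΦ.localInverse Φ e x₀ with hψdef
  have hψ : HasStrictFDerivAt ψ (e.symm : ((ℝ × ℝ) × K) →L[ℝ] E4) (Φ x₀) :=
    hΦ.to_localInverse
  obtain ⟨C, t, ht, hlip⟩ := hψ.exists_lipschitzOnWith
  have hev : ∀ᶠ x in 𝓝 x₀, ψ (Φ x) = x := hΦ.eventually_left_inverse
  refine ⟨{x | ψ (Φ x) = x} ∩ Φ ⁻¹' t,
    inter_mem hev (hΦ.continuousAt.preimage_mem_nhds ht), ?_⟩
  set g : K → (ℝ × ℝ) × K := fun k => ((0, 0), k) with hg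
  have hsub : {x : E4 | x ∈ U ∧ ∀ i, pd i u x = 0} ∩ ({x | ψ (Φ x) = x} ∩ Φ ⁻¹' t)
      ⊆ ψ '' (t ∩ Set.range g) := by
    rintro x ⟨⟨hxU, hxgrad⟩, hxfix, hxt⟩
    refine ⟨Φ x, ⟨hxt, ⟨π x, ?_⟩⟩, hxfix⟩
    show (((0 : ℝ), (0 : ℝ)), π x) = Φ x
    simp only [hΦdef, hxgrad i, hxgrad j]
  calc dimH ({x : E4 | x ∈ U ∧ ∀ i, pd i u x = 0} ∩ ({x | ψ (Φ x) = x} ∩ Φ ⁻¹' t))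
      ≤ dimH (ψ '' (t ∩ Set.range g)) := dimH_mono hsub
    _ ≤ dimH (t ∩ Set.range g) := (hlip.mono Set.inter_subset_left).dimH_image_le
    _ ≤ dimH (Set.range g) := dimH_mono Set.inter_subset_right
    _ ≤ dimH (Set.univ : Set K) := by
        rw [← Set.image_univ]
        exact (LipschitzWith.prodMk_left (((0 : ℝ), (0 : ℝ)))).dimH_image_le Set.univ
    _ = 2 := by
        rw [Real.dimH_univ_eq_finrank, hfinK]
        norm_num

/-- if `σ₂(A_u) ≠ 0` on an open set `U`, then the critical set
`{∇u = 0} ∩ U` has vanishing 3- and 4-dimensional Hausdorff measure. -/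
theorem critical_set_null (U : Set E4) (hU : IsOpen U) (u : E4 → ℝ)
    (hu : ContDiffOn ℝ 2 u U)
    (h : ∀ x ∈ U, sigma2 (schouten u x) ≠ 0) :
    μH[3] {x : E4 | x ∈ U ∧ ∀ i, pd i u x = 0} = 0 ∧
    μH[4] {x : E4 | x ∈ U ∧ ∀ i, pd i u x = 0} = 0 := by
  set S : Set E4 := {x : E4 | x ∈ U ∧ ∀ i, pd i u x = 0} with hS
  have hpd : ∀ k : Fin 4, ContDiffOn ℝ 1 (pd k u) U := by
    intro k
    have hfd : ContDiffOn ℝ 1 (fun x => fderiv ℝ u x) U :=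
      hu.fderiv_of_isOpen hU (by norm_num)
    exact hfd.clm_apply contDiffOn_const
  have hloc : ∀ x₀ ∈ S, ∃ W ∈ 𝓝 x₀, dimH (S ∩ W) ≤ 2 := by
    rintro x₀ ⟨hx₀U, hgrad⟩
    have hσ : sigma2 (schouten u x₀) ≠ 0 := h x₀ hx₀U
    set H : Fin 4 → Fin 4 → ℝ := fun a b => pd a (pd b u) x₀ with hH
    have hσ' : (∑ i, H i i) ^ 2 - (∑ i, ∑ j, H i j * H j i) ≠ 0 := by
      intro h0
      apply hσ
      have e1 : schouten u x₀ = Matrix.of (fun i j => -(H i j)) := by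
        ext i j
        simp [schouten, hgrad, hH]
      rw [e1]
      simp only [sigma2, Matrix.trace, Matrix.diag, Matrix.mul_apply, Matrix.of_apply,
        Finset.sum_neg_distrib, neg_mul_neg, neg_sq]
      rw [h0]
      norm_num
    obtain ⟨i, j, hij⟩ := exists_minor H hσ'
    exact local_dimH U hU u x₀ hx₀U hpd i j hij
  have hdim : dimH S ≤ 2 := by
    by_contra hlt
    push_neg at hlt
    obtain ⟨x, hxS, hx⟩ := exists_mem_nhdsWithin_lt_dimH_of_lt_dimH hlt
    obtain ⟨W, hW, hdW⟩ := hloc x hxS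
    have hmem : S ∩ W ∈ 𝓝[S] x :=
      inter_mem self_mem_nhdsWithin (mem_nhdsWithin_of_mem_nhds hW)
    exact absurd (hx _ hmem) (not_lt.mpr hdW)
  constructor
  · have h3 : μH[((3 : ℝ≥0) : ℝ)] S = 0 :=
      hausdorffMeasure_of_dimH_lt (lt_of_le_of_lt hdim (by norm_num))
    simpa using h3
  · have h4 : μH[((4 : ℝ≥0) : ℝ)] S = 0 :=
      hausdorffMeasure_of_dimH_lt (lt_of_le_of_lt hdim (by norm_num))
    simpa using h4
end
end
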